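/- Let n ≥ 0 be an integer and let 𝒞 : { z ∈ ℂ^{n+1} : z_{n+1} ≠ −i } → ℂ^{n+1} be the Cayley transform 𝒞(z) = ( 2i z_1/(i+z_{n+1}), …, 2i z_n/(i+z_{n+1}), (i−z_{n+1})/(i+z_{n+1}) ). For z in the Siegel domain 𝒰 = { z : Im z_{n+1} > Σ_{j=1}^{n} |z_j|² }, write t = Re z_{n+1} and q = Im z_{n+1} − Σ_{j=1}^{n} |z_j|². Then the absolute value of the determinant of the (real) Fréchet derivative of 𝒞 at z, viewed as an ℝ-linear map ℝ^{2n+2} → ℝ^{2n+2}, equals 4^{n+1} / ( t² + (1 + q + Σ_{j=1}^{n} |z_j|²)² )^{n+2}; equivalently, it equals 4^{n+1} / |i + z_{n+1}|^{2n+4}. -/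

import Mathlib

noncomputable section

open Complex

private def blockEquiv {ι : Type*} (k : ι) : Fin 2 ≃ {x : (_ : ι) × Fin 2 // x.1 = k} where
  toFun l := ⟨⟨k, l⟩, rfl⟩
  invFun x := x.1.2
  left_inv l := rfl
  right_inv x := by rcases x with ⟨⟨a, b⟩, h⟩; subst h; rfl

lemma det_complex_block {ι : Type*} [DecidableEq ι] [Fintype ι] (k : ι)
    (M : Matrix ((_ : ι) × Fin 2) ((_ : ι) × Fin 2) ℝ) (u : ℂ)
    (h00 : M ⟨k,0⟩ ⟨k,0⟩ = u.re) (h01 : M ⟨k,0⟩ ⟨k,1⟩ = -u.im)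
    (h10 : M ⟨k,1⟩ ⟨k,0⟩ = u.im) (h11 : M ⟨k,1⟩ ⟨k,1⟩ = u.re) :
    (M.toSquareBlock Sigma.fst k).det = Complex.normSq u := by
  rw [← Matrix.det_submatrix_equiv_self (blockEquiv k), Matrix.det_fin_two]
  simp only [Matrix.submatrix_apply, Matrix.toSquareBlock_def, blockEquiv, Equiv.coe_fn_mk,
    Matrix.of_apply, h00, h01, h10, h11, Complex.normSq_apply]
  ring

/-- The Siegel domain 𝒰 ⊂ ℂ^{n+1}: Im z_{n+1} > Σ_{j<n} |z_j|². -/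
def Siegel (n : ℕ) : Set (Fin (n + 1) → ℂ) :=
  {z | (∑ j : Fin n, ‖z j.castSucc‖ ^ 2) < (z (Fin.last n)).im}

/-- The Cayley transform, defined away from z_{n+1} = −i. -/
def cayley (n : ℕ) (z : Fin (n + 1) → ℂ) : Fin (n + 1) → ℂ :=
  fun a =>
    if a = Fin.last n then (Complex.I - z (Fin.last n)) / (Complex.I + z (Fin.last n))
    else 2 * Complex.I * z a / (Complex.I + z (Fin.last n))

theorem stmt16 (n : ℕ) :
    ∀ z ∈ Siegel n,
      |LinearMap.det (fderiv ℝ (cayley n) z : (Fin (n + 1) → ℂ) →ₗ[ℝ] (Fin (n + 1) → ℂ))|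
          = 4 ^ (n + 1) /
              ((z (Fin.last n)).re ^ 2 +
                (1 + ((z (Fin.last n)).im - ∑ j : Fin n, ‖z j.castSucc‖ ^ 2) +
                  ∑ j : Fin n, ‖z j.castSucc‖ ^ 2) ^ 2) ^ (n + 2) ∧
        |LinearMap.det (fderiv ℝ (cayley n) z : (Fin (n + 1) → ℂ) →ₗ[ℝ] (Fin (n + 1) → ℂ))|
          = 4 ^ (n + 1) / ‖Complex.I + z (Fin.last n)‖ ^ (2 * n + 4) := by
  intro z hz
  set w := z (Fin.last n) with hwdef
  have hS : (0:ℝ) ≤ ∑ j : Fin n, ‖z j.castSucc‖ ^ 2 := by positivity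
  have him : (0:ℝ) < (Complex.I + w).im := by
    simp only [Complex.add_im, Complex.I_im]
    have := hz
    simp only [Siegel, Set.mem_setOf_eq] at this
    linarith
  have hw : Complex.I + w ≠ 0 := by
    intro h
    rw [h] at him
    simp at him
  -- the complex derivative
  set P : (i : Fin (n+1)) → ((Fin (n+1) → ℂ) →L[ℂ] ℂ) :=
    fun i => ContinuousLinearMap.proj i with hP
  set d : ℂ →L[ℂ] ℂ :=
    ContinuousLinearMap.smulRight (1 : ℂ →L[ℂ] ℂ) (-((Complex.I + w) ^ 2)⁻¹) with hd
  set g' : (Fin (n+1) → ℂ) →L[ℂ] ℂ := d.comp (P (Fin.last n)) with hg'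
  set Lc : (i : Fin (n+1)) → ((Fin (n+1) → ℂ) →L[ℂ] ℂ) := fun i =>
    if i = Fin.last n then
      (Complex.I - w) • g' + (Complex.I + w)⁻¹ • (-(P (Fin.last n)))
    else (2 * Complex.I * z i) • g' + (Complex.I + w)⁻¹ • ((2 * Complex.I) • P i) with hLc
  set L : (Fin (n+1) → ℂ) →L[ℂ] (Fin (n+1) → ℂ) := ContinuousLinearMap.pi Lc with hL
  have hden : HasFDerivAt (fun z : Fin (n+1) → ℂ => Complex.I + z (Fin.last n))
      (P (Fin.last n)) z := (hasFDerivAt_apply (Fin.last n) z).const_add Complex.I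
  have hginv : HasFDerivAt (fun z : Fin (n+1) → ℂ => (Complex.I + z (Fin.last n))⁻¹) g' z :=
    (hasFDerivAt_inv hw).comp z hden
  have hder : HasFDerivAt (cayley n) L z := by
    rw [hL]
    apply hasFDerivAt_pi.2
    intro i
    by_cases hi : i = Fin.last n
    · subst hi
      simp only [hLc, if_pos rfl, cayley, div_eq_mul_inv]
      have hnum : HasFDerivAt (fun z : Fin (n+1) → ℂ => Complex.I - z (Fin.last n))
          (-(P (Fin.last n))) z := (hasFDerivAt_apply (Fin.last n) z).const_sub Complex.I
      exact hnum.mul hginv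
    · simp only [hLc, if_neg hi, cayley, div_eq_mul_inv]
      have hnum : HasFDerivAt (fun z : Fin (n+1) → ℂ => 2 * Complex.I * z i)
          ((2 * Complex.I) • P i) z := (hasFDerivAt_apply i z).const_mul (2 * Complex.I)
      exact hnum.mul hginv
  have hfd : (fderiv ℝ (cayley n) z : (Fin (n + 1) → ℂ) →ₗ[ℝ] (Fin (n + 1) → ℂ))
      = ((L.restrictScalars ℝ : (Fin (n + 1) → ℂ) →L[ℝ] (Fin (n + 1) → ℂ)) :
          (Fin (n + 1) → ℂ) →ₗ[ℝ] (Fin (n + 1) → ℂ)) := by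
    rw [(hder.restrictScalars ℝ).fderiv]
  -- the multipliers
  set m : Fin (n+1) → ℂ := fun k =>
    if k = Fin.last n then -(2 * Complex.I) / (Complex.I + w) ^ 2
    else 2 * Complex.I / (Complex.I + w) with hm
  -- values of L on basis vectors
  have hLapp : ∀ (v : Fin (n+1) → ℂ) (i : Fin (n+1)), L v i =
      if i = Fin.last n then
        (Complex.I - w) * (v (Fin.last n) * -((Complex.I + w) ^ 2)⁻¹)
          + (Complex.I + w)⁻¹ * (-(v (Fin.last n)))
      else (2 * Complex.I * z i) * (v (Fin.last n) * -((Complex.I + w) ^ 2)⁻¹)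
          + (Complex.I + w)⁻¹ * (2 * Complex.I * v i) := by
    intro v i
    by_cases hi : i = Fin.last n
    · subst hi
      rw [if_pos rfl]
      simp only [hL, ContinuousLinearMap.pi_apply, hLc]
      simp only [if_true, eq_self_iff_true]
      simp only [ContinuousLinearMap.add_apply, ContinuousLinearMap.smul_apply, hg',
        ContinuousLinearMap.comp_apply, hP, ContinuousLinearMap.proj_apply,
        ContinuousLinearMap.neg_apply, hd, ContinuousLinearMap.smulRight_apply,
        ContinuousLinearMap.one_apply, smul_eq_mul]
    · rw [if_neg hi]
      simp only [hL, ContinuousLinearMap.pi_apply, hLc]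
      rw [if_neg hi]
      simp only [ContinuousLinearMap.add_apply, ContinuousLinearMap.smul_apply, hg',
        ContinuousLinearMap.comp_apply, hP, ContinuousLinearMap.proj_apply,
        ContinuousLinearMap.neg_apply, hd, ContinuousLinearMap.smulRight_apply,
        ContinuousLinearMap.one_apply, smul_eq_mul]
  have hw2 : (Complex.I + w) ^ 2 ≠ 0 := pow_ne_zero 2 hw
  have hmlast : m (Fin.last n) = -(2 * Complex.I) / (Complex.I + w) ^ 2 := by
    simp [hm]
  have hmne : ∀ i : Fin (n+1), i ≠ Fin.last n → m i = 2 * Complex.I / (Complex.I + w) := by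
    intro i hi
    simp [hm, hi]
  have hLval : ∀ (j : Fin (n+1)) (u : ℂ) (i : Fin (n+1)),
      L (Pi.single j u) i =
        (if i = j then m i * u else if j = Fin.last n then L (Pi.single j u) i else 0) := by
    intro j u i
    by_cases hij : i = j
    · subst hij
      rw [if_pos rfl, hLapp]
      by_cases hi : i = Fin.last n
      · subst hi
        rw [if_pos rfl, Pi.single_eq_same, hmlast]
        field_simp
        ring
      · have h1 : (Pi.single i u : Fin (n+1) → ℂ) (Fin.last n) = 0 := by
          rw [Pi.single_apply, if_neg (Ne.symm hi)]
        rw [if_neg hi, h1, Pi.single_eq_same, hmne i hi]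
        field_simp
        ring
    · rw [if_neg hij]
      by_cases hj : j = Fin.last n
      · rw [if_pos hj]
      · rw [if_neg hj, hLapp]
        have h1 : (Pi.single j u : Fin (n+1) → ℂ) (Fin.last n) = 0 := by
          rw [Pi.single_apply, if_neg (Ne.symm hj)]
        have h2 : (Pi.single j u : Fin (n+1) → ℂ) i = 0 := by
          rw [Pi.single_apply, if_neg hij]
        by_cases hi : i = Fin.last n
        · rw [if_pos hi, h1]
          ring
        · rw [if_neg hi, h1, h2]
          ring
  -- the matrix
  set B := Pi.basis (fun _ : Fin (n+1) => Complex.basisOneI) with hB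
  set Lr := ((L.restrictScalars ℝ : (Fin (n + 1) → ℂ) →L[ℝ] (Fin (n + 1) → ℂ)) :
      (Fin (n + 1) → ℂ) →ₗ[ℝ] (Fin (n + 1) → ℂ)) with hLr
  set M := LinearMap.toMatrix B B Lr with hM2
  have hMentry : ∀ (i j : Fin (n+1)) (a b : Fin 2),
      M ⟨i, a⟩ ⟨j, b⟩ = (Complex.basisOneI.repr ((L (Pi.single j (Complex.basisOneI b))) i)) a := by
    intro i j a b
    rw [hM2, LinearMap.toMatrix_apply, hB, Pi.basis_apply, Pi.basis_repr]
    rfl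
  have htri : M.BlockTriangular Sigma.fst := by
    intro x y hxy
    obtain ⟨i, a⟩ := x
    obtain ⟨j, b⟩ := y
    have hij : i ≠ j := by
      intro h
      rw [h] at hxy
      exact lt_irrefl _ hxy
    have hj : j ≠ Fin.last n := by
      intro h
      rw [h] at hxy
      exact absurd (Fin.le_last i) (not_le.2 hxy)
    rw [hMentry]
    rw [hLval j _ i, if_neg hij, if_neg hj]
    simp
  have hdiag : ∀ (k : Fin (n+1)), (M.toSquareBlock Sigma.fst k).det = Complex.normSq (m k) := by
    intro k
    have hv : ∀ b : Fin 2, L (Pi.single k (Complex.basisOneI b)) k = m k * Complex.basisOneI b := by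
      intro b
      rw [hLval k _ k, if_pos rfl]
    apply det_complex_block k M (m k) <;>
      rw [hMentry, hv] <;>
      simp [Complex.coe_basisOneI, Complex.coe_basisOneI_repr]
  have hmlast : m (Fin.last n) = -(2 * Complex.I) / (Complex.I + w) ^ 2 := by
    simp only [hm, if_pos rfl]
  have hmcast : ∀ j : Fin n, m j.castSucc = 2 * Complex.I / (Complex.I + w) := by
    intro j
    simp only [hm, if_neg (Fin.castSucc_lt_last j).ne]
  have hdet : LinearMap.det Lr = Complex.normSq (2 * Complex.I / (Complex.I + w)) ^ n *
      Complex.normSq (-(2 * Complex.I) / (Complex.I + w) ^ 2) := by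
    rw [← LinearMap.det_toMatrix B Lr, ← hM2, htri.det_fintype]
    have : ∀ k : Fin (n+1), (M.toSquareBlock Sigma.fst k).det = Complex.normSq (m k) := hdiag
    rw [Finset.prod_congr rfl fun k _ => hdiag k, Fin.prod_univ_castSucc, hmlast]
    congr 1
    rw [Finset.prod_congr rfl fun (j : Fin n) _ => congrArg Complex.normSq (hmcast j),
      Finset.prod_const, Finset.card_univ, Fintype.card_fin]
  -- numerical evaluation
  have hK : (0:ℝ) < ‖Complex.I + w‖ := norm_pos_iff.mpr hw
  have hKne : ‖Complex.I + w‖ ≠ 0 := hK.ne'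
  have hns : Complex.normSq (Complex.I + w) = ‖Complex.I + w‖ ^ 2 := by
    rw [Complex.normSq_eq_norm_sq]
  have h2I : Complex.normSq (2 * Complex.I) = 4 := by
    simp [Complex.normSq_mul]
    norm_num [Complex.normSq_apply]
  have hnsq1 : Complex.normSq (2 * Complex.I / (Complex.I + w)) = 4 / ‖Complex.I + w‖ ^ 2 := by
    rw [Complex.normSq_div, h2I, hns]
  have hnsq2 : Complex.normSq (-(2 * Complex.I) / (Complex.I + w) ^ 2)
      = 4 / ‖Complex.I + w‖ ^ 4 := by
    rw [Complex.normSq_div, Complex.normSq_neg, h2I, map_pow, hns, ← pow_mul]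
  have hval : LinearMap.det Lr = 4 ^ (n + 1) / ‖Complex.I + w‖ ^ (2 * n + 4) := by
    rw [hdet, hnsq1, hnsq2, div_pow, div_mul_div_comm, ← pow_succ, ← pow_mul, ← pow_add]
  have habs : |LinearMap.det (fderiv ℝ (cayley n) z :
      (Fin (n + 1) → ℂ) →ₗ[ℝ] (Fin (n + 1) → ℂ))|
      = 4 ^ (n + 1) / ‖Complex.I + w‖ ^ (2 * n + 4) := by
    rw [hfd, hval]
    exact abs_of_nonneg (by positivity)
  refine ⟨?_, habs⟩
  have h2 : w.re ^ 2 + (1 + w.im) ^ 2 = ‖Complex.I + w‖ ^ 2 := by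
    rw [← hns, Complex.normSq_apply, Complex.add_re, Complex.add_im, Complex.I_re, Complex.I_im]
    ring
  have hdenom : (w.re ^ 2 +
      (1 + (w.im - ∑ j : Fin n, ‖z j.castSucc‖ ^ 2) + ∑ j : Fin n, ‖z j.castSucc‖ ^ 2) ^ 2)
        ^ (n + 2) = ‖Complex.I + w‖ ^ (2 * n + 4) := by
    have h1 : (1:ℝ) + (w.im - ∑ j : Fin n, ‖z j.castSucc‖ ^ 2) + ∑ j : Fin n, ‖z j.castSucc‖ ^ 2
        = 1 + w.im := by ring
    rw [h1, h2, ← pow_mul]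
    congr 1
  rw [habs, hdenom]

end
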